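/- If X is a strictly convex real normed space, then for all unit vectors x ≠ y and every δ > 0 there exists z ∈ X with ‖z‖ < δ such that ‖x + z‖ < 1 and ‖y + z‖ > 1 (or vice versa). -/

import Mathlib

theorem stmt0 {X : Type*} [NormedAddCommGroup X] [NormedSpace ℝ X]
    (hsc : ∀ x y : X, x ≠ y → ‖x‖ = 1 → ‖y‖ = 1 →
      ∀ t : ℝ, 0 < t → t < 1 → ‖t • x + (1 - t) • y‖ < 1) :
    ∀ x y : X, ‖x‖ = 1 → ‖y‖ = 1 → x ≠ y → ∀ δ : ℝ, 0 < δ →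
      ∃ z : X, ‖z‖ < δ ∧
        ((1 < ‖x + z‖ ∧ ‖y + z‖ < 1) ∨ (‖x + z‖ < 1 ∧ 1 < ‖y + z‖)) := by
  intro x y hx hy hxy δ hδ
  have hd : (0:ℝ) < ‖y - x‖ := by
    rw [norm_pos_iff, sub_ne_zero]; exact fun h => hxy h.symm
  set d := ‖y - x‖ with hdd
  set t : ℝ := min (1/2) (δ / (2 * d)) with ht
  have ht0 : 0 < t := lt_min (by norm_num) (div_pos hδ (by linarith))
  have ht1 : t < 1 := lt_of_le_of_lt (min_le_left _ _) (by norm_num)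
  refine ⟨t • (y - x), ?_, Or.inr ⟨?_, ?_⟩⟩
  · have : ‖t • (y - x)‖ = t * d := by
      rw [norm_smul, Real.norm_eq_abs, abs_of_pos ht0]
    rw [this]
    have h1 : t ≤ δ / (2 * d) := min_le_right _ _
    have := mul_le_mul_of_nonneg_right h1 hd.le
    have h2 : δ / (2 * d) * d = δ / 2 := by field_simp
    rw [h2] at this
    linarith
  · have heq : x + t • (y - x) = t • y + (1 - t) • x := by module
    rw [heq]
    exact hsc y x (fun h => hxy h.symm) hy hx t ht0 ht1
  · by_contra h
    push_neg at h
    set w : X := y + t • (y - x) with hw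
    set s : ℝ := 1 / (1 + t) with hs
    have hs0 : 0 < s := by positivity
    have hs1 : s < 1 := by
      rw [hs, div_lt_one (by linarith)]; linarith
    have hysw : y = s • w + (1 - s) • x := by
      rw [hw, hs]
      have h1t : (1:ℝ) + t ≠ 0 := by linarith
      rw [show (1:ℝ) - 1 / (1 + t) = t / (1 + t) by field_simp; ring]
      match_scalars <;> field_simp <;> ring
    rcases lt_or_eq_of_le h with hlt | heq
    · have : ‖y‖ < 1 := by
        calc ‖y‖ = ‖s • w + (1 - s) • x‖ := by rw [← hysw]
        _ ≤ ‖s • w‖ + ‖(1 - s) • x‖ := norm_add_le _ _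
        _ = s * ‖w‖ + (1 - s) * 1 := by
            rw [norm_smul, norm_smul, Real.norm_eq_abs, Real.norm_eq_abs,
              abs_of_pos hs0, abs_of_pos (by linarith), hx]
        _ < s * 1 + (1 - s) * 1 := by
            have := mul_lt_mul_of_pos_left hlt hs0
            linarith
        _ = 1 := by ring
      linarith [hy]
    · -- ‖w‖ = 1
      have hwx : w ≠ x := by
        intro hwx
        apply hxy
        have h2 := hysw
        rw [hwx, ← add_smul] at h2
        simpa using h2.symm
      have := hsc w x hwx heq hx s hs0 hs1
      rw [← hysw, hy] at this
      linarith
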